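/- Let a, b ≥ 1 and let P be the product of a chain with a elements and a chain with b elements (the poset of boxes of an a×b rectangular Young diagram). Then the expected jaggedness of an order ideal of P under the linear distribution μ_lin equals 2ab/(a+b), the harmonic mean of a and b. -/

import Mathlib

open Finset
open scoped Classical

noncomputable section

variable {α : Type*} [Fintype α] [PartialOrder α]

/-- `I` is an order ideal (down-set) of the finite poset `α`. -/
def IsIdeal (I : Finset α) : Prop := ∀ p ∈ I, ∀ q : α, q ≤ p → q ∈ I

/-- The set `J(P)` of all order ideals of the finite poset `α`. -/
def idealsFinset (α : Type*) [Fintype α] [PartialOrder α] : Finset (Finset α) :=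
  Finset.univ.filter fun I => IsIdeal I

/-- `p` can be toggled in to the order ideal `I`. -/
def CanToggleIn (I : Finset α) (p : α) : Prop := p ∉ I ∧ IsIdeal (insert p I)

/-- `p` can be toggled out of the order ideal `I`. -/
def CanToggleOut (I : Finset α) (p : α) : Prop := p ∈ I ∧ IsIdeal (I.erase p)

/-- The jaggedness of `I`: the number of elements that can be toggled in,
plus the number of elements that can be toggled out. -/
def jag (I : Finset α) : ℕ :=
  (Finset.univ.filter fun p => CanToggleIn I p).card +
  (Finset.univ.filter fun p => CanToggleOut I p).card

/-- The probability, under `μ`, that a random order ideal satisfies `E`. -/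
def prIdeal (μ : Finset α → ℝ) (E : Finset α → Prop) : ℝ :=
  ∑ I ∈ (idealsFinset α).filter E, μ I

/-- `μ` is toggle-symmetric: for every `p`, the probability that `p` can be toggled in
equals the probability that `p` can be toggled out. -/
def ToggleSymmetric (μ : Finset α → ℝ) : Prop :=
  ∀ p : α, prIdeal μ (fun I => CanToggleIn I p) = prIdeal μ (fun I => CanToggleOut I p)

/-- `μ` is a probability distribution on `J(P)`. -/
def IsProbDist (μ : Finset α → ℝ) : Prop :=
  (∀ I, 0 ≤ μ I) ∧ (∀ I, ¬ IsIdeal I → μ I = 0) ∧ (∑ I ∈ idealsFinset α, μ I = 1)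

/-- The expectation of the statistic `f` with respect to `μ`. -/
def expectStat (μ : Finset α → ℝ) (f : Finset α → ℝ) : ℝ :=
  ∑ I ∈ idealsFinset α, μ I * f I

/-- The linear extensions of `α`: order-preserving bijections `α ≃ {1,…,n}`. -/
def linExts (α : Type*) [Fintype α] [PartialOrder α] :
    Finset (α ≃ Fin (Fintype.card α)) :=
  Finset.univ.filter fun e => ∀ p q : α, p ≤ q → e p ≤ e q

/-- The linear distribution `μ_lin` on `J(P)`: the distribution of `ℓ⁻¹({1,…,k})` for a
uniformly random linear extension `ℓ` and uniform `k ∈ {0,1,…,n}`. -/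
def muLin (α : Type*) [Fintype α] [PartialOrder α] (I : Finset α) : ℝ :=
  (∑ e ∈ linExts α, ∑ k ∈ Finset.range (Fintype.card α + 1),
      if Finset.univ.filter (fun p => (e p : ℕ) < k) = I then (1 : ℝ) else 0) /
    ((linExts α).card * (Fintype.card α + 1))

namespace CHHM

abbrev Cell (a b : ℕ) := Fin a × Fin b

@[local instance 2000] noncomputable abbrev cellDecEq {a b : ℕ} : DecidableEq (Fin a × Fin b) :=
  fun _ _ => Classical.propDecidable _

variable {a b : ℕ}

lemma downclosed_eq_Ico (S : Finset ℕ) (l : ℕ) (hl : ∀ x ∈ S, l ≤ x)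
    (hdc : ∀ x ∈ S, ∀ y, l ≤ y → y ≤ x → y ∈ S) :
    S = Finset.Ico l (l + S.card) := by
  have hsub : S ⊆ Finset.Ico l (l + S.card) := by
    intro x hx
    have h1 : Finset.Icc l x ⊆ S := by
      intro y hy
      rw [Finset.mem_Icc] at hy
      exact hdc x hx y hy.1 hy.2
    have h2 : (Finset.Icc l x).card ≤ S.card := Finset.card_le_card h1
    rw [Nat.card_Icc] at h2
    have := hl x hx
    simp only [Finset.mem_Ico]
    omega
  refine Finset.eq_of_subset_of_card_le hsub ?_
  rw [Nat.card_Ico]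
  omega

def hh (b : ℕ) (I : Finset (Cell a b)) (s : ℕ) : ℕ :=
  (s - b) + (I.filter fun q => q.1.val + b = q.2.val + s).card

lemma hh_zero (I : Finset (Cell a b)) : hh b I 0 = 0 := by
  have h : (I.filter fun q : Cell a b => q.1.val + b = q.2.val + 0) = ∅ :=
    Finset.filter_false_of_mem (fun q _ => by have := q.2.isLt; omega)
  unfold hh; rw [h]; simp

lemma hh_top (I : Finset (Cell a b)) : hh b I (a + b) = a := by
  have h : (I.filter fun q : Cell a b => q.1.val + b = q.2.val + (a + b)) = ∅ :=
    Finset.filter_false_of_mem (fun q _ => by have := q.1.isLt; omega)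
  unfold hh; rw [h]; simp

lemma hh_ge (I : Finset (Cell a b)) (s : ℕ) : s - b ≤ hh b I s := Nat.le_add_right _ _

lemma mem_iff_lt_hh {I : Finset (Cell a b)} (hI : IsIdeal I) {p : Cell a b} {s : ℕ}
    (hs : p.1.val + b = p.2.val + s) : p ∈ I ↔ p.1.val < hh b I s := by
  set F := I.filter fun q : Cell a b => q.1.val + b = q.2.val + s with hF
  set S := F.image fun q : Cell a b => q.1.val with hS
  have hcard : S.card = F.card := by
    apply Finset.card_image_of_injOn
    intro q hq q' hq' hqq
    rw [Finset.mem_coe, Finset.mem_filter] at hq hq'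
    obtain ⟨_, hq⟩ := hq; obtain ⟨_, hq'⟩ := hq'
    have hqq' : (q.1 : ℕ) = (q'.1 : ℕ) := hqq
    have h2 : q.2.val = q'.2.val := by omega
    exact Prod.ext (Fin.ext hqq') (Fin.ext h2)
  have hl : ∀ x ∈ S, s - b ≤ x := by
    intro x hx
    simp only [hS, Finset.mem_image] at hx
    obtain ⟨q, hq, rfl⟩ := hx
    rw [hF, Finset.mem_filter] at hq
    obtain ⟨_, hq⟩ := hq
    omega
  have hdc : ∀ x ∈ S, ∀ y, s - b ≤ y → y ≤ x → y ∈ S := by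
    intro x hx y hly hyx
    simp only [hS, Finset.mem_image] at hx ⊢
    obtain ⟨q, hq, rfl⟩ := hx
    rw [hF, Finset.mem_filter] at hq
    obtain ⟨hqI, hqf⟩ := hq
    have hq2 := q.2.isLt
    have hy2 : y + b - s < b := by omega
    have hy1 : y < a := by have := q.1.isLt; omega
    refine ⟨(⟨y, hy1⟩, ⟨y + b - s, hy2⟩), ?_, rfl⟩
    rw [Finset.mem_filter]
    refine ⟨hI q hqI _ ?_, by simp; omega⟩
    rw [Prod.le_def]
    refine ⟨hyx, ?_⟩
    simp only [Fin.le_def]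
    omega
  have hIco := downclosed_eq_Ico S (s - b) hl hdc
  have hmem : p ∈ I ↔ p.1.val ∈ S := by
    constructor
    · intro h
      simp only [hS, Finset.mem_image]
      exact ⟨p, by rw [hF, Finset.mem_filter]; exact ⟨h, hs⟩, rfl⟩
    · intro h
      simp only [hS, Finset.mem_image] at h
      obtain ⟨q, hq, hq1⟩ := h
      rw [hF, Finset.mem_filter] at hq
      obtain ⟨hqI, hqf⟩ := hq
      have h2 : q.2.val = p.2.val := by omega
      have : q = p := Prod.ext (Fin.ext hq1) (Fin.ext h2)
      rw [← this]; exact hqI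
  rw [hmem, hIco, Finset.mem_Ico, hcard]
  have hp1 : s - b ≤ p.1.val := by omega
  unfold hh
  rw [← hF]
  omega

lemma hh_le_a (I : Finset (Cell a b)) {s : ℕ} (hs : s ≤ a + b) : hh b I s ≤ a := by
  have hc : (I.filter fun q : Cell a b => q.1.val + b = q.2.val + s).card
      ≤ (Finset.Ico (s - b) a).card := by
    apply Finset.card_le_card_of_injOn (fun q => q.1.val)
    · intro q hq
      rw [Finset.mem_coe, Finset.mem_filter] at hq
      obtain ⟨_, hq⟩ := hq
      have := q.2.isLt; have := q.1.isLt
      rw [Finset.mem_coe, Finset.mem_Ico]; beta_reduce; omega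
    · intro q hq q' hq' hqq
      rw [Finset.mem_coe, Finset.mem_filter] at hq hq'
      obtain ⟨_, hq⟩ := hq; obtain ⟨_, hq'⟩ := hq'
      have hqq' : (q.1 : ℕ) = (q'.1 : ℕ) := hqq
      exact Prod.ext (Fin.ext hqq') (Fin.ext (show q.2.val = q'.2.val by omega))
  rw [Nat.card_Ico] at hc
  unfold hh
  omega

lemma hh_le_s (I : Finset (Cell a b)) (s : ℕ) : hh b I s ≤ s := by
  have hc : (I.filter fun q : Cell a b => q.1.val + b = q.2.val + s).card
      ≤ (Finset.Ico (b - s) b).card := by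
    apply Finset.card_le_card_of_injOn (fun q => q.2.val)
    · intro q hq
      rw [Finset.mem_coe, Finset.mem_filter] at hq
      obtain ⟨_, hq⟩ := hq
      have := q.2.isLt
      rw [Finset.mem_coe, Finset.mem_Ico]; beta_reduce; omega
    · intro q hq q' hq' hqq
      rw [Finset.mem_coe, Finset.mem_filter] at hq hq'
      obtain ⟨_, hq⟩ := hq; obtain ⟨_, hq'⟩ := hq'
      have hqq' : (q.2 : ℕ) = (q'.2 : ℕ) := hqq
      exact Prod.ext (Fin.ext (show q.1.val = q'.1.val by omega)) (Fin.ext hqq')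
  rw [Nat.card_Ico] at hc
  unfold hh
  omega

lemma hh_mono {I : Finset (Cell a b)} (hI : IsIdeal I) {s : ℕ} (hs : s + 1 ≤ a + b) :
    hh b I s ≤ hh b I (s + 1) := by
  by_cases hcase : hh b I s ≤ (s + 1) - b
  · exact le_trans hcase (hh_ge I (s+1))
  · push_neg at hcase
    have h1 : 1 ≤ hh b I s := by omega
    have hha : hh b I s ≤ a := hh_le_a I (by omega)
    have hhs : hh b I s ≤ s := hh_le_s I s
    have hsb : s - b ≤ hh b I s - 1 := by have := hh_ge I s; omega
    have hj : hh b I s - 1 + b - s < b := by omega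
    have hi : hh b I s - 1 < a := by omega
    have hpI : ((⟨hh b I s - 1, hi⟩, ⟨hh b I s - 1 + b - s, hj⟩) : Cell a b) ∈ I := by
      rw [mem_iff_lt_hh hI (show (hh b I s - 1) + b = (hh b I s - 1 + b - s) + s by omega)]
      show hh b I s - 1 < hh b I s
      omega
    by_cases hj0 : hh b I s - 1 + b - s = 0
    · have := hh_ge I (s+1)
      omega
    · have hj1 : hh b I s - 1 + b - s - 1 < b := by omega
      have hp'I : ((⟨hh b I s - 1, hi⟩, ⟨hh b I s - 1 + b - s - 1, hj1⟩) : Cell a b) ∈ I := by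
        apply hI _ hpI
        rw [Prod.mk_le_mk]
        exact ⟨le_refl _, Fin.mk_le_mk.mpr (by omega)⟩
      rw [mem_iff_lt_hh hI
        (show (hh b I s - 1) + b = (hh b I s - 1 + b - s - 1) + (s+1) by omega)] at hp'I
      have : hh b I s - 1 < hh b I (s+1) := hp'I
      omega

lemma hh_step {I : Finset (Cell a b)} (hI : IsIdeal I) {s : ℕ} (hs : s + 1 ≤ a + b) :
    hh b I (s + 1) ≤ hh b I s + 1 := by
  by_cases hcase : hh b I (s+1) ≤ (s - b) + 1
  · have := hh_ge I s; omega
  · push_neg at hcase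
    have h2 : s - b + 2 ≤ hh b I (s+1) := by omega
    have hha : hh b I (s+1) ≤ a := hh_le_a I hs
    have hhs : hh b I (s+1) ≤ s + 1 := hh_le_s I (s+1)
    have hj : hh b I (s+1) - 1 + b - (s+1) < b := by omega
    have hjb : s + 1 ≤ hh b I (s+1) - 1 + b := by omega
    have hi : hh b I (s+1) - 1 < a := by omega
    have hpI : ((⟨hh b I (s+1) - 1, hi⟩, ⟨hh b I (s+1) - 1 + b - (s+1), hj⟩) : Cell a b) ∈ I := by
      rw [mem_iff_lt_hh hI
        (show (hh b I (s+1) - 1) + b = (hh b I (s+1) - 1 + b - (s+1)) + (s+1) by omega)]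
      show hh b I (s+1) - 1 < hh b I (s+1)
      omega
    have hi2 : hh b I (s+1) - 2 < a := by omega
    have hp'I : ((⟨hh b I (s+1) - 2, hi2⟩,
        ⟨hh b I (s+1) - 1 + b - (s+1), hj⟩) : Cell a b) ∈ I := by
      apply hI _ hpI
      rw [Prod.mk_le_mk, Fin.mk_le_mk, Fin.mk_le_mk]
      exact ⟨by omega, by omega⟩
    rw [mem_iff_lt_hh hI (show (hh b I (s+1) - 2) + b
      = (hh b I (s+1) - 1 + b - (s+1)) + s by omega)] at hp'I
    have : hh b I (s+1) - 2 < hh b I s := hp'I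
    omega
lemma le_cell {p q : Cell a b} (h1 : p.1.val ≤ q.1.val) (h2 : p.2.val ≤ q.2.val) : p ≤ q :=
  Prod.le_def.mpr ⟨Fin.le_def.mpr h1, Fin.le_def.mpr h2⟩

lemma cell_ne {p q : Cell a b} (h : p.1.val ≠ q.1.val ∨ p.2.val ≠ q.2.val) : p ≠ q := by
  intro hc; subst hc; simp at h

lemma s_bounds {p : Cell a b} {s : ℕ} (hs : p.1.val + b = p.2.val + s) :
    1 ≤ s ∧ s + 1 ≤ a + b := by
  have h1 := p.1.isLt; have h2 := p.2.isLt
  omega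

lemma toggleIn_iff {I : Finset (Cell a b)} (hI : IsIdeal I) {p : Cell a b} {s : ℕ}
    (hs : p.1.val + b = p.2.val + s) :
    CanToggleIn I p ↔
      hh b I (s - 1) = hh b I s ∧ hh b I (s + 1) = hh b I s + 1 ∧ hh b I s = p.1.val := by
  obtain ⟨hs1, hs2⟩ := s_bounds hs
  have hse : s - 1 + 1 = s := by omega
  have hmono1 : hh b I (s - 1) ≤ hh b I s := by
    have := hh_mono hI (s := s - 1) (by omega); rwa [hse] at this
  have hstep1 : hh b I s ≤ hh b I (s - 1) + 1 := by
    have := hh_step hI (s := s - 1) (by omega); rwa [hse] at this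
  have hmono2 : hh b I s ≤ hh b I (s + 1) := hh_mono hI hs2
  have hstep2 : hh b I (s + 1) ≤ hh b I s + 1 := hh_step hI hs2
  constructor
  · rintro ⟨hpI, hins⟩
    rw [mem_iff_lt_hh hI hs] at hpI
    push_neg at hpI
    have hleft : p.1.val ≠ 0 → (hh b I (s-1) = p.1.val ∧ hh b I s = p.1.val) := by
      intro h0
      have hi : p.1.val - 1 < a := by have := p.1.isLt; omega
      have hc1 : ((⟨p.1.val - 1, hi⟩, p.2) : Cell a b) ∈ I := by
        have hmem := hins p (Finset.mem_insert_self p I)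
          ((⟨p.1.val - 1, hi⟩, p.2) : Cell a b)
          (le_cell (p := (⟨p.1.val - 1, hi⟩, p.2)) (q := p)
            (show p.1.val - 1 ≤ p.1.val by omega) (le_refl _))
        rcases Finset.mem_insert.mp hmem with h | h
        · exact absurd h (cell_ne (Or.inl (show p.1.val - 1 ≠ p.1.val by omega)))
        · exact h
      rw [mem_iff_lt_hh (p := (⟨p.1.val - 1, hi⟩, p.2)) (s := s - 1) hI
        (show p.1.val - 1 + b = p.2.val + (s - 1) by omega)] at hc1
      have hc1' : p.1.val - 1 < hh b I (s-1) := hc1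
      omega
    have hfact : hh b I s = p.1.val ∧ hh b I (s-1) = hh b I s := by
      by_cases h0 : p.1.val = 0
      · omega
      · have := hleft h0; omega
    refine ⟨hfact.2, ?_, hfact.1⟩
    by_cases hb0 : p.2.val = 0
    · have := hh_ge I (s + 1)
      omega
    · have hj : p.2.val - 1 < b := by have := p.2.isLt; omega
      have hc2 : ((p.1, ⟨p.2.val - 1, hj⟩) : Cell a b) ∈ I := by
        have hmem := hins p (Finset.mem_insert_self p I)
          ((p.1, ⟨p.2.val - 1, hj⟩) : Cell a b)
          (le_cell (p := (p.1, ⟨p.2.val - 1, hj⟩)) (q := p)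
            (le_refl _) (show p.2.val - 1 ≤ p.2.val by omega))
        rcases Finset.mem_insert.mp hmem with h | h
        · exact absurd h (cell_ne (Or.inr (show p.2.val - 1 ≠ p.2.val by omega)))
        · exact h
      rw [mem_iff_lt_hh (p := (p.1, ⟨p.2.val - 1, hj⟩)) (s := s + 1) hI
        (show p.1.val + b = p.2.val - 1 + (s + 1) by omega)] at hc2
      have hc2' : p.1.val < hh b I (s+1) := hc2
      omega
  · rintro ⟨h0, h1, h2⟩
    constructor
    · rw [mem_iff_lt_hh hI hs]; omega
    · intro q hq r hrq
      refine Finset.mem_insert.mpr ?_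
      rcases Finset.mem_insert.mp hq with rfl | hqI
      · by_cases hrp : r = q
        · exact Or.inl hrp
        · refine Or.inr ?_
          rw [Prod.le_def] at hrq
          obtain ⟨hr1, hr2⟩ := hrq
          rw [Fin.le_def] at hr1 hr2
          have hne : r.1.val < q.1.val ∨ r.2.val < q.2.val := by
            by_contra hcon
            push_neg at hcon
            exact hrp (Prod.ext (Fin.ext (by omega)) (Fin.ext (by omega)))
          rcases hne with hlt | hlt
          · have hi : q.1.val - 1 < a := by have := q.1.isLt; omega
            have hc1 : ((⟨q.1.val - 1, hi⟩, q.2) : Cell a b) ∈ I := by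
              rw [mem_iff_lt_hh (p := (⟨q.1.val - 1, hi⟩, q.2)) (s := s - 1) hI
                (show q.1.val - 1 + b = q.2.val + (s - 1) by omega)]
              show q.1.val - 1 < hh b I (s - 1)
              omega
            exact hI _ hc1 r
              (le_cell (p := r) (q := (⟨q.1.val - 1, hi⟩, q.2))
                (show r.1.val ≤ q.1.val - 1 by omega) (show r.2.val ≤ q.2.val by omega))
          · have hj : q.2.val - 1 < b := by have := q.2.isLt; omega
            have hc2 : ((q.1, ⟨q.2.val - 1, hj⟩) : Cell a b) ∈ I := by
              rw [mem_iff_lt_hh (p := (q.1, ⟨q.2.val - 1, hj⟩)) (s := s + 1) hI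
                (show q.1.val + b = q.2.val - 1 + (s + 1) by omega)]
              show q.1.val < hh b I (s + 1)
              omega
            exact hI _ hc2 r
              (le_cell (p := r) (q := (q.1, ⟨q.2.val - 1, hj⟩))
                (show r.1.val ≤ q.1.val by omega) (show r.2.val ≤ q.2.val - 1 by omega))
      · exact Or.inr (hI q hqI r hrq)

lemma toggleOut_iff {I : Finset (Cell a b)} (hI : IsIdeal I) {p : Cell a b} {s : ℕ}
    (hs : p.1.val + b = p.2.val + s) :
    CanToggleOut I p ↔
      hh b I (s - 1) + 1 = hh b I s ∧ hh b I (s + 1) = hh b I s ∧ hh b I s = p.1.val + 1 := by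
  obtain ⟨hs1, hs2⟩ := s_bounds hs
  have hse : s - 1 + 1 = s := by omega
  have hmono1 : hh b I (s - 1) ≤ hh b I s := by
    have := hh_mono hI (s := s - 1) (by omega); rwa [hse] at this
  have hstep1 : hh b I s ≤ hh b I (s - 1) + 1 := by
    have := hh_step hI (s := s - 1) (by omega); rwa [hse] at this
  have hmono2 : hh b I s ≤ hh b I (s + 1) := hh_mono hI hs2
  have hstep2 : hh b I (s + 1) ≤ hh b I s + 1 := hh_step hI hs2
  constructor
  · rintro ⟨hpI, hers⟩
    rw [mem_iff_lt_hh hI hs] at hpI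
    have hup : hh b I (s + 1) = p.1.val + 1 ∧ hh b I s = p.1.val + 1 := by
      by_cases hia : p.1.val + 1 < a
      · have hc3 : ((⟨p.1.val + 1, hia⟩, p.2) : Cell a b) ∉ I := by
          intro hmem
          have h2 := hers ((⟨p.1.val + 1, hia⟩, p.2) : Cell a b)
            (Finset.mem_erase.mpr
              ⟨cell_ne (Or.inl (show p.1.val + 1 ≠ p.1.val by omega)), hmem⟩) p
            (le_cell (p := p) (q := (⟨p.1.val + 1, hia⟩, p.2))
              (show p.1.val ≤ p.1.val + 1 by omega) (le_refl _))
          exact (Finset.mem_erase.mp h2).1 rfl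
        rw [mem_iff_lt_hh (p := (⟨p.1.val + 1, hia⟩, p.2)) (s := s + 1) hI
          (show p.1.val + 1 + b = p.2.val + (s + 1) by omega)] at hc3
        have hc3' : ¬ (p.1.val + 1 < hh b I (s+1)) := hc3
        omega
      · have ha1 : hh b I s ≤ a := hh_le_a I (by omega)
        have ha2 : hh b I (s+1) ≤ a := hh_le_a I (by omega)
        omega
    refine ⟨?_, by omega, hup.2⟩
    by_cases hjb : p.2.val + 1 < b
    · have hc4 : ((p.1, ⟨p.2.val + 1, hjb⟩) : Cell a b) ∉ I := by
        intro hmem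
        have h2 := hers ((p.1, ⟨p.2.val + 1, hjb⟩) : Cell a b)
          (Finset.mem_erase.mpr
            ⟨cell_ne (Or.inr (show p.2.val + 1 ≠ p.2.val by omega)), hmem⟩) p
          (le_cell (p := p) (q := (p.1, ⟨p.2.val + 1, hjb⟩))
            (le_refl _) (show p.2.val ≤ p.2.val + 1 by omega))
        exact (Finset.mem_erase.mp h2).1 rfl
      rw [mem_iff_lt_hh (p := (p.1, ⟨p.2.val + 1, hjb⟩)) (s := s - 1) hI
        (show p.1.val + b = p.2.val + 1 + (s - 1) by omega)] at hc4
      have hc4' : ¬ (p.1.val < hh b I (s-1)) := hc4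
      omega
    · have := hh_le_s I (s - 1)
      omega
  · rintro ⟨h0, h1, h2⟩
    constructor
    · rw [mem_iff_lt_hh hI hs]; omega
    · intro q hq r hrq
      obtain ⟨hqp, hqI⟩ := Finset.mem_erase.mp hq
      refine Finset.mem_erase.mpr ⟨?_, hI q hqI r hrq⟩
      rintro rfl
      rw [Prod.le_def] at hrq
      obtain ⟨hr1, hr2⟩ := hrq
      rw [Fin.le_def] at hr1 hr2
      have hne : r.1.val < q.1.val ∨ r.2.val < q.2.val := by
        by_contra hcon
        push_neg at hcon
        exact hqp (Prod.ext (Fin.ext (by omega)) (Fin.ext (by omega)))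
      rcases hne with hlt | hlt
      · have hia : r.1.val + 1 < a := by have := q.1.isLt; omega
        have hc3 : ((⟨r.1.val + 1, hia⟩, r.2) : Cell a b) ∈ I :=
          hI q hqI _
            (le_cell (p := (⟨r.1.val + 1, hia⟩, r.2)) (q := q)
              (show r.1.val + 1 ≤ q.1.val by omega) (show r.2.val ≤ q.2.val by omega))
        rw [mem_iff_lt_hh (p := (⟨r.1.val + 1, hia⟩, r.2)) (s := s + 1) hI
          (show r.1.val + 1 + b = r.2.val + (s + 1) by omega)] at hc3
        have hc3' : r.1.val + 1 < hh b I (s+1) := hc3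
        omega
      · have hjb : r.2.val + 1 < b := by have := q.2.isLt; omega
        have hc4 : ((r.1, ⟨r.2.val + 1, hjb⟩) : Cell a b) ∈ I :=
          hI q hqI _
            (le_cell (p := (r.1, ⟨r.2.val + 1, hjb⟩)) (q := q)
              (show r.1.val ≤ q.1.val by omega) (show r.2.val + 1 ≤ q.2.val by omega))
        rw [mem_iff_lt_hh (p := (r.1, ⟨r.2.val + 1, hjb⟩)) (s := s - 1) hI
          (show r.1.val + b = r.2.val + 1 + (s - 1) by omega)] at hc4
        have hc4' : r.1.val < hh b I (s-1) := hc4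
        omega
def Ie (e : α ≃ Fin (Fintype.card α)) (k : ℕ) : Finset α :=
  Finset.univ.filter fun p => (e p : ℕ) < k

lemma mem_Ie {e : α ≃ Fin (Fintype.card α)} {k : ℕ} {p : α} :
    p ∈ Ie e k ↔ (e p : ℕ) < k := by
  simp [Ie]

lemma linExts_mono {e : α ≃ Fin (Fintype.card α)} (he : e ∈ linExts α) {p q : α}
    (h : p ≤ q) : (e p : ℕ) ≤ (e q : ℕ) := by
  rw [linExts, Finset.mem_filter] at he
  exact he.2 p q h

lemma linExts_strictMono {e : α ≃ Fin (Fintype.card α)} (he : e ∈ linExts α) {p q : α}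
    (h : p < q) : (e p : ℕ) < (e q : ℕ) := by
  have h1 := linExts_mono he h.le
  have h2 : e p ≠ e q := fun hc => h.ne (e.injective hc)
  have h3 : (e p : ℕ) ≠ (e q : ℕ) := fun hc => h2 (Fin.ext hc)
  omega

lemma canIn_iff {e : α ≃ Fin (Fintype.card α)} (he : e ∈ linExts α) {k : ℕ} {p : α} :
    CanToggleIn (Ie e k) p ↔ k ≤ (e p : ℕ) ∧ ∀ q, q < p → (e q : ℕ) < k := by
  constructor
  · rintro ⟨hnot, hins⟩
    rw [mem_Ie] at hnot
    refine ⟨by omega, fun q hq => ?_⟩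
    have hmem := hins p (Finset.mem_insert_self p _) q hq.le
    rcases Finset.mem_insert.mp hmem with h | h
    · exact absurd h hq.ne
    · exact mem_Ie.mp h
  · rintro ⟨hk, hlow⟩
    constructor
    · rw [mem_Ie]; omega
    · intro r hr t htr
      refine Finset.mem_insert.mpr ?_
      by_cases htp : t = p
      · exact Or.inl htp
      · refine Or.inr (mem_Ie.mpr ?_)
        rcases Finset.mem_insert.mp hr with rfl | hrI
        · exact hlow t (lt_of_le_of_ne htr htp)
        · have := linExts_mono he htr
          have := mem_Ie.mp hrI
          omega

lemma canOut_iff {e : α ≃ Fin (Fintype.card α)} (he : e ∈ linExts α) {k : ℕ} {p : α} :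
    CanToggleOut (Ie e k) p ↔ (e p : ℕ) < k ∧ ∀ q, p < q → k ≤ (e q : ℕ) := by
  constructor
  · rintro ⟨hmem, hers⟩
    rw [mem_Ie] at hmem
    refine ⟨hmem, fun q hq => ?_⟩
    by_contra hcon
    push_neg at hcon
    have hq_er : q ∈ (Ie e k).erase p :=
      Finset.mem_erase.mpr ⟨hq.ne', mem_Ie.mpr hcon⟩
    have := hers q hq_er p hq.le
    exact (Finset.mem_erase.mp this).1 rfl
  · rintro ⟨hk, hhigh⟩
    constructor
    · exact mem_Ie.mpr hk
    · intro r hr t htr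
      obtain ⟨hrp, hrI⟩ := Finset.mem_erase.mp hr
      refine Finset.mem_erase.mpr ⟨?_, ?_⟩
      · rintro rfl
        have : t < r := lt_of_le_of_ne htr (fun hc => hrp hc.symm)
        have := hhigh r this
        have := mem_Ie.mp hrI
        omega
      · have := linExts_mono he htr
        have := mem_Ie.mp hrI
        exact mem_Ie.mpr (by omega)

/- the cyclic shift permutation on `Fin n` moving the interval `[u,v]` -/
def shiftFun {n : ℕ} (u v : Fin n) (x : Fin n) : Fin n :=
  if x = v then u
  else if h : u.val ≤ x.val ∧ x.val < v.val then ⟨x.val + 1, by have := v.isLt; omega⟩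
  else x

def unshiftFun {n : ℕ} (u v : Fin n) (y : Fin n) : Fin n :=
  if y = u then v
  else if h : u.val < y.val ∧ y.val ≤ v.val then ⟨y.val - 1, by have := y.isLt; omega⟩
  else y

lemma shiftFun_v {n : ℕ} (u v : Fin n) : shiftFun u v v = u := by
  unfold shiftFun; rw [if_pos rfl]

lemma unshiftFun_u {n : ℕ} (u v : Fin n) : unshiftFun u v u = v := by
  unfold unshiftFun; rw [if_pos rfl]

lemma shiftFun_mid {n : ℕ} {u v x : Fin n} (h : u.val ≤ x.val ∧ x.val < v.val) :
    shiftFun u v x = ⟨x.val + 1, by have := v.isLt; omega⟩ := by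
  unfold shiftFun
  rw [if_neg (fun hc : x = v => by have : x.val = v.val := congrArg Fin.val hc; omega),
    dif_pos h]

lemma shiftFun_out {n : ℕ} {u v x : Fin n} (hx : x ≠ v)
    (h : ¬ (u.val ≤ x.val ∧ x.val < v.val)) : shiftFun u v x = x := by
  unfold shiftFun
  rw [if_neg hx, dif_neg h]

lemma unshiftFun_mid {n : ℕ} {u v y : Fin n} (h : u.val < y.val ∧ y.val ≤ v.val) :
    unshiftFun u v y = ⟨y.val - 1, by have := y.isLt; omega⟩ := by
  unfold unshiftFun
  rw [if_neg (fun hc : y = u => by have : y.val = u.val := congrArg Fin.val hc; omega),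
    dif_pos h]

lemma unshiftFun_out {n : ℕ} {u v y : Fin n} (hy : y ≠ u)
    (h : ¬ (u.val < y.val ∧ y.val ≤ v.val)) : unshiftFun u v y = y := by
  unfold unshiftFun
  rw [if_neg hy, dif_neg h]

lemma unshift_shift {n : ℕ} {u v : Fin n} (huv : u.val ≤ v.val) (x : Fin n) :
    unshiftFun u v (shiftFun u v x) = x := by
  by_cases h1 : x = v
  · subst h1; rw [shiftFun_v, unshiftFun_u]
  · by_cases h2 : u.val ≤ x.val ∧ x.val < v.val
    · rw [shiftFun_mid h2, unshiftFun_mid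
        ⟨(by omega : u.val < x.val + 1), (by omega : x.val + 1 ≤ v.val)⟩]
      exact Fin.ext (show x.val + 1 - 1 = x.val by omega)
    · have hxv : x.val ≠ v.val := fun hc => h1 (Fin.ext hc)
      have hxu : x ≠ u := fun hc => by
        have : x.val = u.val := congrArg Fin.val hc
        omega
      rw [shiftFun_out h1 h2, unshiftFun_out hxu (by omega)]

lemma shift_unshift {n : ℕ} {u v : Fin n} (huv : u.val ≤ v.val) (y : Fin n) :
    shiftFun u v (unshiftFun u v y) = y := by
  by_cases h1 : y = u
  · subst h1; rw [unshiftFun_u, shiftFun_v]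
  · by_cases h2 : u.val < y.val ∧ y.val ≤ v.val
    · rw [unshiftFun_mid h2]
      rw [shiftFun_mid ⟨(by omega : u.val ≤ y.val - 1), (by omega : y.val - 1 < v.val)⟩]
      exact Fin.ext (show y.val - 1 + 1 = y.val by omega)
    · have hyu : y.val ≠ u.val := fun hc => h1 (Fin.ext hc)
      have hyv : y ≠ v := fun hc => by
        have : y.val = v.val := congrArg Fin.val hc
        omega
      rw [unshiftFun_out h1 h2, shiftFun_out hyv (by omega)]

def shiftEquiv {n : ℕ} (u v : Fin n) (huv : u.val ≤ v.val) : Fin n ≃ Fin n where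
  toFun := shiftFun u v
  invFun := unshiftFun u v
  left_inv := unshift_shift huv
  right_inv := shift_unshift huv

lemma shiftFun_val_le {n : ℕ} {u v : Fin n} (huv : u.val ≤ v.val) {x y : Fin n}
    (hxy : x.val ≤ y.val) (hxv : x ≠ v) (hyv : y ≠ v) :
    (shiftFun u v x).val ≤ (shiftFun u v y).val := by
  have hxv' : x.val ≠ v.val := fun hc => hxv (Fin.ext hc)
  have hyv' : y.val ≠ v.val := fun hc => hyv (Fin.ext hc)
  by_cases h1 : u.val ≤ x.val ∧ x.val < v.val
  · rw [shiftFun_mid h1]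
    by_cases h2 : u.val ≤ y.val ∧ y.val < v.val
    · rw [shiftFun_mid h2]
      show x.val + 1 ≤ y.val + 1
      omega
    · rw [shiftFun_out hyv h2]
      show x.val + 1 ≤ y.val
      omega
  · rw [shiftFun_out hxv h1]
    by_cases h2 : u.val ≤ y.val ∧ y.val < v.val
    · rw [shiftFun_mid h2]
      show x.val ≤ y.val + 1
      omega
    · rw [shiftFun_out hyv h2]
      exact hxy
lemma unshiftFun_val_le {n : ℕ} {u v : Fin n} (huv : u.val ≤ v.val) {x y : Fin n}
    (hxy : x.val ≤ y.val) (hxu : x ≠ u) (hyu : y ≠ u) :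
    (unshiftFun u v x).val ≤ (unshiftFun u v y).val := by
  have hxu' : x.val ≠ u.val := fun hc => hxu (Fin.ext hc)
  have hyu' : y.val ≠ u.val := fun hc => hyu (Fin.ext hc)
  by_cases h1 : u.val < x.val ∧ x.val ≤ v.val
  · rw [unshiftFun_mid h1]
    by_cases h2 : u.val < y.val ∧ y.val ≤ v.val
    · rw [unshiftFun_mid h2]
      show x.val - 1 ≤ y.val - 1
      omega
    · rw [unshiftFun_out hyu h2]
      show x.val - 1 ≤ y.val
      omega
  · rw [unshiftFun_out hxu h1]
    by_cases h2 : u.val < y.val ∧ y.val ≤ v.val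
    · rw [unshiftFun_mid h2]
      show x.val ≤ y.val - 1
      omega
    · rw [unshiftFun_out hyu h2]
      exact hxy

lemma shiftEquiv_apply {n : ℕ} (u v : Fin n) (huv : u.val ≤ v.val) (x : Fin n) :
    shiftEquiv u v huv x = shiftFun u v x := rfl

lemma shiftEquiv_symm_apply {n : ℕ} (u v : Fin n) (huv : u.val ≤ v.val) (x : Fin n) :
    (shiftEquiv u v huv).symm x = unshiftFun u v x := rfl

lemma shiftEquiv_congr {n : ℕ} {u1 u2 v1 v2 : Fin n} (hu : u1 = u2) (hv : v1 = v2)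
    {h1 : u1.val ≤ v1.val} {h2 : u2.val ≤ v2.val} :
    shiftEquiv u1 v1 h1 = shiftEquiv u2 v2 h2 := by
  subst hu; subst hv; rfl

lemma mem_linExts_iff {e : α ≃ Fin (Fintype.card α)} :
    e ∈ linExts α ↔ ∀ p q : α, p ≤ q → e p ≤ e q := by
  rw [linExts, Finset.mem_filter]
  simp

lemma trans_shift_mem_linExts {e : α ≃ Fin (Fintype.card α)} (he : e ∈ linExts α) {p : α}
    {u : Fin (Fintype.card α)} (huv : u.val ≤ (e p).val)
    (hlow : ∀ q, q < p → (e q).val < u.val) :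
    e.trans (shiftEquiv u (e p) huv) ∈ linExts α := by
  rw [mem_linExts_iff]
  intro q r hqr
  rcases eq_or_lt_of_le hqr with rfl | hlt
  · exact le_refl _
  · show (shiftFun u (e p) (e q)).val ≤ (shiftFun u (e p) (e r)).val
    by_cases hrp : r = p
    · subst hrp
      have h1 : (e q).val < u.val := hlow q hlt
      rw [shiftFun_v, shiftFun_out (fun hc => by
          have := congrArg Fin.val hc; omega) (by omega)]
      omega
    · by_cases hqp : q = p
      · subst hqp
        have h1 : (e q).val < (e r).val := linExts_strictMono he hlt
        rw [shiftFun_v, shiftFun_out (fun hc => by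
            have := congrArg Fin.val hc; omega) (by omega)]
        omega
      · have hq' : e q ≠ e p := fun hc => hqp (e.injective hc)
        have hr' : e r ≠ e p := fun hc => hrp (e.injective hc)
        exact shiftFun_val_le huv (linExts_mono he hqr) hq' hr'

lemma trans_unshift_mem_linExts {e : α ≃ Fin (Fintype.card α)} (he : e ∈ linExts α) {p : α}
    {v : Fin (Fintype.card α)} (huv : (e p).val ≤ v.val)
    (hhigh : ∀ q, p < q → v.val < (e q).val) :
    e.trans (shiftEquiv (e p) v huv).symm ∈ linExts α := by
  rw [mem_linExts_iff]
  intro q r hqr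
  rcases eq_or_lt_of_le hqr with rfl | hlt
  · exact le_refl _
  · show (unshiftFun (e p) v (e q)).val ≤ (unshiftFun (e p) v (e r)).val
    by_cases hrp : r = p
    · subst hrp
      have h1 : (e q).val < (e r).val := linExts_strictMono he hlt
      rw [unshiftFun_u, unshiftFun_out (fun hc => by
          have := congrArg Fin.val hc; omega) (by omega)]
      omega
    · by_cases hqp : q = p
      · subst hqp
        have h1 : v.val < (e r).val := hhigh r hlt
        rw [unshiftFun_u, unshiftFun_out (fun hc => by
            have := congrArg Fin.val hc; omega) (by omega)]
        omega
      · have hq' : e q ≠ e p := fun hc => hqp (e.injective hc)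
        have hr' : e r ≠ e p := fun hc => hrp (e.injective hc)
        exact unshiftFun_val_le huv (linExts_mono he hqr) hq' hr'

/-- forward map : in-toggle pairs → out-toggle pairs -/
def fwd (p : α) (ek : (α ≃ Fin (Fintype.card α)) × ℕ) : (α ≃ Fin (Fintype.card α)) × ℕ :=
  if h : ek.2 < Fintype.card α ∧ ek.2 ≤ (ek.1 p).val then
    (ek.1.trans (shiftEquiv ⟨ek.2, h.1⟩ (ek.1 p) h.2), (ek.1 p).val + 1)
  else ek

def bwd (p : α) (ek : (α ≃ Fin (Fintype.card α)) × ℕ) : (α ≃ Fin (Fintype.card α)) × ℕ :=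
  if h : 0 < ek.2 ∧ ek.2 ≤ Fintype.card α ∧ (ek.1 p).val ≤ ek.2 - 1 then
    (ek.1.trans (shiftEquiv (ek.1 p) ⟨ek.2 - 1, by omega⟩ h.2.2).symm, (ek.1 p).val)
  else ek

theorem toggle_sym (p : α) :
    (((linExts α) ×ˢ Finset.range (Fintype.card α + 1)).filter
        fun ek => CanToggleIn (Ie ek.1 ek.2) p).card =
    (((linExts α) ×ˢ Finset.range (Fintype.card α + 1)).filter
        fun ek => CanToggleOut (Ie ek.1 ek.2) p).card := by
  apply Finset.card_nbij' (fwd p) (bwd p)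
  · -- fwd maps in-pairs to out-pairs
    rintro ⟨e, k⟩ ha
    rw [Finset.mem_coe, Finset.mem_filter, Finset.mem_product, Finset.mem_range] at ha
    obtain ⟨⟨he, hk⟩, hcan⟩ := ha
    rw [canIn_iff he] at hcan
    obtain ⟨hk1x, hlowx⟩ := hcan
    have hk1 : k ≤ (e p).val := hk1x
    have hlow : ∀ q, q < p → (e q).val < k := hlowx
    have hvn := (e p).isLt
    have hcond : k < Fintype.card α ∧ k ≤ (e p).val := ⟨by omega, hk1⟩
    rw [Finset.mem_coe, Finset.mem_filter, Finset.mem_product, Finset.mem_range]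
    rw [fwd, dif_pos hcond]
    have he' : e.trans (shiftEquiv ⟨k, hcond.1⟩ (e p) hcond.2) ∈ linExts α :=
      trans_shift_mem_linExts he hcond.2 (fun q hq => hlow q hq)
    refine ⟨⟨he', by omega⟩, ?_⟩
    rw [canOut_iff he']
    constructor
    · show (shiftFun ⟨k, hcond.1⟩ (e p) (e p)).val < (e p).val + 1
      rw [shiftFun_v]
      show k < (e p).val + 1
      omega
    · intro q hq
      show (e p).val + 1 ≤ (shiftFun ⟨k, hcond.1⟩ (e p) (e q)).val
      have h1 : (e p).val < (e q).val := linExts_strictMono he hq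
      rw [shiftFun_out (fun hc => by have := congrArg Fin.val hc; omega)
        (by show ¬ (k ≤ _ ∧ _); omega)]
      omega
  · -- bwd maps out-pairs to in-pairs
    rintro ⟨e, k⟩ ha
    rw [Finset.mem_coe, Finset.mem_filter, Finset.mem_product, Finset.mem_range] at ha
    obtain ⟨⟨he, hk⟩, hcan⟩ := ha
    rw [canOut_iff he] at hcan
    obtain ⟨hk1x, hhighx⟩ := hcan
    have hk1 : (e p).val < k := hk1x
    have hhigh : ∀ q, p < q → k ≤ (e q).val := hhighx
    have hvn := (e p).isLt
    have hcond : 0 < k ∧ k ≤ Fintype.card α ∧ (e p).val ≤ k - 1 := ⟨by omega, by omega, by omega⟩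
    rw [Finset.mem_coe, Finset.mem_filter, Finset.mem_product, Finset.mem_range]
    rw [bwd, dif_pos hcond]
    have he' : e.trans (shiftEquiv (e p) ⟨k - 1, by omega⟩ hcond.2.2).symm ∈ linExts α :=
      trans_unshift_mem_linExts he hcond.2.2 (fun q hq => by
        show k - 1 < (e q).val
        have := hhigh q hq
        omega)
    refine ⟨⟨he', by omega⟩, ?_⟩
    rw [canIn_iff he']
    constructor
    · show (e p).val ≤ (unshiftFun (e p) ⟨k - 1, by omega⟩ (e p)).val
      rw [unshiftFun_u]
      show (e p).val ≤ k - 1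
      omega
    · intro q hq
      show (unshiftFun (e p) ⟨k - 1, by omega⟩ (e q)).val < (e p).val
      have h1 : (e q).val < (e p).val := linExts_strictMono he hq
      rw [unshiftFun_out (fun hc => by have := congrArg Fin.val hc; omega)
        (by show ¬ ((e p).val < _ ∧ _); omega)]
      omega
  · -- left inverse
    rintro ⟨e, k⟩ ha
    rw [Finset.mem_coe, Finset.mem_filter, Finset.mem_product, Finset.mem_range] at ha
    obtain ⟨⟨he, hk⟩, hcan⟩ := ha
    rw [canIn_iff he] at hcan
    obtain ⟨hk1x, hlowx⟩ := hcan
    have hk1 : k ≤ (e p).val := hk1x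
    have hlow : ∀ q, q < p → (e q).val < k := hlowx
    have hvn := (e p).isLt
    have hcond : k < Fintype.card α ∧ k ≤ (e p).val := ⟨by omega, hk1⟩
    rw [fwd, dif_pos hcond]
    rw [bwd]
    have hep' : ((e.trans (shiftEquiv ⟨k, hcond.1⟩ (e p) hcond.2)) p) = ⟨k, hcond.1⟩ := by
      show shiftFun ⟨k, hcond.1⟩ (e p) (e p) = ⟨k, hcond.1⟩
      exact shiftFun_v _ _
    have hcond2 : 0 < (e p).val + 1 ∧ (e p).val + 1 ≤ Fintype.card α ∧
        ((e.trans (shiftEquiv ⟨k, hcond.1⟩ (e p) hcond.2)) p).val ≤ (e p).val + 1 - 1 := by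
      refine ⟨by omega, by omega, ?_⟩
      rw [hep']
      show k ≤ (e p).val + 1 - 1
      omega
    rw [dif_pos hcond2]
    have h2 : (shiftEquiv ((e.trans (shiftEquiv ⟨k, hcond.1⟩ (e p) hcond.2)) p)
        (⟨(e p).val + 1 - 1, by omega⟩ : Fin (Fintype.card α)) hcond2.2.2)
        = shiftEquiv ⟨k, hcond.1⟩ (e p) hcond.2 :=
      shiftEquiv_congr hep' (Fin.ext (by show (e p).val + 1 - 1 = (e p).val; omega))
    rw [Prod.mk.injEq]
    constructor
    · rw [h2, Equiv.trans_assoc, Equiv.self_trans_symm, Equiv.trans_refl]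
    · rw [hep']
  · -- right inverse
    rintro ⟨e, k⟩ ha
    rw [Finset.mem_coe, Finset.mem_filter, Finset.mem_product, Finset.mem_range] at ha
    obtain ⟨⟨he, hk⟩, hcan⟩ := ha
    rw [canOut_iff he] at hcan
    obtain ⟨hk1x, hhighx⟩ := hcan
    have hk1 : (e p).val < k := hk1x
    have hhigh : ∀ q, p < q → k ≤ (e q).val := hhighx
    have hvn := (e p).isLt
    have hcond : 0 < k ∧ k ≤ Fintype.card α ∧ (e p).val ≤ k - 1 := ⟨by omega, by omega, by omega⟩
    rw [bwd, dif_pos hcond]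
    rw [fwd]
    have hep' : ((e.trans (shiftEquiv (e p) ⟨k - 1, by omega⟩ hcond.2.2).symm) p)
        = (⟨k - 1, by omega⟩ : Fin (Fintype.card α)) := by
      show unshiftFun (e p) ⟨k - 1, by omega⟩ (e p) = _
      exact unshiftFun_u _ _
    have hcond2 : (e p).val < Fintype.card α ∧
        (e p).val ≤ ((e.trans (shiftEquiv (e p) ⟨k - 1, by omega⟩ hcond.2.2).symm) p).val := by
      refine ⟨by omega, ?_⟩
      rw [hep']
      show (e p).val ≤ k - 1
      omega
    rw [dif_pos hcond2]
    have h2 : (shiftEquiv (⟨(e p).val, hcond2.1⟩ : Fin (Fintype.card α))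
        ((e.trans (shiftEquiv (e p) ⟨k - 1, by omega⟩ hcond.2.2).symm) p) hcond2.2)
        = shiftEquiv (e p) ⟨k - 1, by omega⟩ hcond.2.2 :=
      shiftEquiv_congr (Fin.ext rfl) hep'
    rw [Prod.mk.injEq]
    constructor
    · rw [h2, Equiv.trans_assoc, Equiv.symm_trans_self, Equiv.trans_refl]
    · rw [hep']
      show k - 1 + 1 = k
      omega

def tIn (b : ℕ) (I : Finset (Cell a b)) (s : ℕ) : Finset (Cell a b) :=
  Finset.univ.filter fun p => p.1.val + b = p.2.val + s ∧ CanToggleIn I p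

def tOut (b : ℕ) (I : Finset (Cell a b)) (s : ℕ) : Finset (Cell a b) :=
  Finset.univ.filter fun p => p.1.val + b = p.2.val + s ∧ CanToggleOut I p

lemma tIn_card {I : Finset (Cell a b)} (hI : IsIdeal I) {s : ℕ} (hs1 : 1 ≤ s)
    (hs2 : s < a + b) :
    (tIn b I s).card
      = if hh b I (s-1) = hh b I s ∧ hh b I (s+1) = hh b I s + 1 then 1 else 0 := by
  split_ifs with hcond
  · -- the filter is the singleton (hh s, hh s + b - s)
    obtain ⟨hc1, hc2⟩ := hcond
    have hha : hh b I (s+1) ≤ a := hh_le_a I (by omega)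
    have hia : hh b I s < a := by omega
    have hhs : hh b I s ≤ s - 1 := by
      have := hh_le_s I (s-1); omega
    have hgeb : s - b ≤ hh b I s := hh_ge I s
    have hj : hh b I s + b - s < b := by omega
    have hfile : hh b I s + b = (hh b I s + b - s) + s := by omega
    have hsing : tIn b I s = {(⟨hh b I s, hia⟩, ⟨hh b I s + b - s, hj⟩)} := by
      ext p
      rw [tIn, Finset.mem_filter, Finset.mem_singleton]
      constructor
      · rintro ⟨_, hpos, hcan⟩
        rw [toggleIn_iff hI hpos] at hcan
        refine Prod.ext (Fin.ext ?_) (Fin.ext ?_)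
        · show p.1.val = hh b I s
          omega
        · show p.2.val = hh b I s + b - s
          omega
      · rintro rfl
        refine ⟨Finset.mem_univ _, by show hh b I s + b = (hh b I s + b - s) + s; omega, ?_⟩
        rw [toggleIn_iff hI (by show hh b I s + b = (hh b I s + b - s) + s; omega)]
        exact ⟨hc1, hc2, rfl⟩
    rw [hsing, Finset.card_singleton]
  · rw [Finset.card_eq_zero]
    rw [Finset.eq_empty_iff_forall_notMem]
    intro p hp
    rw [tIn, Finset.mem_filter] at hp
    obtain ⟨_, hpos, hcan⟩ := hp
    rw [toggleIn_iff hI hpos] at hcan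
    exact hcond ⟨hcan.1, hcan.2.1⟩

lemma tOut_card (hb : 1 ≤ b) {I : Finset (Cell a b)} (hI : IsIdeal I) {s : ℕ} (hs1 : 1 ≤ s)
    (hs2 : s < a + b) :
    (tOut b I s).card
      = if hh b I (s-1) + 1 = hh b I s ∧ hh b I (s+1) = hh b I s then 1 else 0 := by
  split_ifs with hcond
  · obtain ⟨hc1, hc2⟩ := hcond
    have hha : hh b I s ≤ a := hh_le_a I (by omega)
    have h1 : 1 ≤ hh b I s := by omega
    have hia : hh b I s - 1 < a := by omega
    have hhs : hh b I s ≤ s := hh_le_s I s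
    have hgeb : s - 1 - b ≤ hh b I (s-1) := hh_ge I (s-1)
    have hge1 : s + 1 - b ≤ hh b I (s+1) := hh_ge I (s+1)
    have hj : hh b I s - 1 + b - s < b := by omega
    have hsing : tOut b I s = {(⟨hh b I s - 1, hia⟩, ⟨hh b I s - 1 + b - s, hj⟩)} := by
      ext p
      rw [tOut, Finset.mem_filter, Finset.mem_singleton]
      constructor
      · rintro ⟨_, hpos, hcan⟩
        rw [toggleOut_iff hI hpos] at hcan
        refine Prod.ext (Fin.ext ?_) (Fin.ext ?_)
        · show p.1.val = hh b I s - 1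
          omega
        · show p.2.val = hh b I s - 1 + b - s
          omega
      · rintro rfl
        refine ⟨Finset.mem_univ _,
          by show hh b I s - 1 + b = (hh b I s - 1 + b - s) + s; omega, ?_⟩
        rw [toggleOut_iff hI (by show hh b I s - 1 + b = (hh b I s - 1 + b - s) + s; omega)]
        refine ⟨hc1, hc2, ?_⟩
        show hh b I s = hh b I s - 1 + 1
        omega
    rw [hsing, Finset.card_singleton]
  · rw [Finset.card_eq_zero, Finset.eq_empty_iff_forall_notMem]
    intro p hp
    rw [tOut, Finset.mem_filter] at hp
    obtain ⟨_, hpos, hcan⟩ := hp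
    rw [toggleOut_iff hI hpos] at hcan
    exact hcond ⟨hcan.1, hcan.2.1⟩

lemma tIn_val {I : Finset (Cell a b)} (hI : IsIdeal I) {s : ℕ} {p : Cell a b}
    (hp : p ∈ tIn b I s) : (p.1.val : ℕ) = hh b I s := by
  rw [tIn, Finset.mem_filter] at hp
  obtain ⟨_, hpos, hcan⟩ := hp
  rw [toggleIn_iff hI hpos] at hcan
  omega

lemma tOut_val {I : Finset (Cell a b)} (hI : IsIdeal I) {s : ℕ} {p : Cell a b}
    (hp : p ∈ tOut b I s) : (p.1.val : ℕ) + 1 = hh b I s := by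
  rw [tOut, Finset.mem_filter] at hp
  obtain ⟨_, hpos, hcan⟩ := hp
  rw [toggleOut_iff hI hpos] at hcan
  omega

lemma sum_tIn {I : Finset (Cell a b)} (hI : IsIdeal I) (s : ℕ) :
    ∑ p ∈ tIn b I s, (p.1.val : ℝ) = (hh b I s : ℝ) * (tIn b I s).card := by
  have hv : ∀ p ∈ tIn b I s, (p.1.val : ℝ) = ((hh b I s : ℕ) : ℝ) := fun p hp => by
    exact_mod_cast tIn_val hI hp
  rw [Finset.sum_congr rfl hv, Finset.sum_const, nsmul_eq_mul, mul_comm]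

lemma sum_tOut {I : Finset (Cell a b)} (hI : IsIdeal I) (s : ℕ) :
    ∑ p ∈ tOut b I s, ((p.1.val : ℝ) + 1) = (hh b I s : ℝ) * (tOut b I s).card := by
  have hv : ∀ p ∈ tOut b I s, (p.1.val : ℝ) + 1 = ((hh b I s : ℕ) : ℝ) := fun p hp => by
    exact_mod_cast tOut_val hI hp
  rw [Finset.sum_congr rfl hv, Finset.sum_const, nsmul_eq_mul, mul_comm]

lemma diff_eq (hb : 1 ≤ b) {I : Finset (Cell a b)} (hI : IsIdeal I) {s : ℕ} (hs1 : 1 ≤ s)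
    (hs2 : s < a + b) :
    ((tOut b I s).card : ℝ) - (tIn b I s).card
      = ((hh b I s : ℝ) - (hh b I (s-1) : ℝ)) - ((hh b I (s+1) : ℝ) - (hh b I s : ℝ)) := by
  have hse : s - 1 + 1 = s := by omega
  have e1 : hh b I (s-1) = hh b I s ∨ hh b I (s-1) + 1 = hh b I s := by
    have h1 := hh_mono hI (s := s - 1) (by omega)
    have h2 := hh_step hI (s := s - 1) (by omega)
    rw [hse] at h1 h2
    omega
  have e2 : hh b I (s+1) = hh b I s ∨ hh b I (s+1) = hh b I s + 1 := by
    have h1 := hh_mono hI (s := s) (by omega)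
    have h2 := hh_step hI (s := s) (by omega)
    omega
  rcases e1 with e1 | e1 <;> rcases e2 with e2 | e2
  · have cin : (tIn b I s).card = 0 := by rw [tIn_card hI hs1 hs2, if_neg (by omega)]
    have cout : (tOut b I s).card = 0 := by rw [tOut_card hb hI hs1 hs2, if_neg (by omega)]
    rw [cin, cout, e1, e2]; push_cast; ring
  · have cin : (tIn b I s).card = 1 := by rw [tIn_card hI hs1 hs2, if_pos ⟨e1, e2⟩]
    have cout : (tOut b I s).card = 0 := by rw [tOut_card hb hI hs1 hs2, if_neg (by omega)]
    rw [cin, cout, e1, e2]; push_cast; ring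
  · have cin : (tIn b I s).card = 0 := by rw [tIn_card hI hs1 hs2, if_neg (by omega)]
    have cout : (tOut b I s).card = 1 := by rw [tOut_card hb hI hs1 hs2, if_pos ⟨e1, e2⟩]
    rw [cin, cout, e2, ← e1]; push_cast; ring
  · have cin : (tIn b I s).card = 0 := by rw [tIn_card hI hs1 hs2, if_neg (by omega)]
    have cout : (tOut b I s).card = 0 := by rw [tOut_card hb hI hs1 hs2, if_neg (by omega)]
    rw [cin, cout, e2, ← e1]; push_cast; ring

lemma wdiff_eq (hb : 1 ≤ b) {I : Finset (Cell a b)} (hI : IsIdeal I) {s : ℕ} (hs1 : 1 ≤ s)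
    (hs2 : s < a + b) :
    (∑ p ∈ tOut b I s, ((p.1.val : ℝ) + 1)) - ∑ p ∈ tIn b I s, (p.1.val : ℝ)
      = (hh b I s : ℝ) *
        (((hh b I s : ℝ) - (hh b I (s-1) : ℝ)) - ((hh b I (s+1) : ℝ) - (hh b I s : ℝ))) := by
  rw [sum_tIn hI, sum_tOut hI, ← mul_sub, diff_eq hb hI hs1 hs2]

lemma tele (m : ℕ) (f : ℕ → ℝ) (h0 : f 0 = 0)
    (hstep : ∀ s, s < m → f (s+1) = f s ∨ f (s+1) = f s + 1) (hm : 1 ≤ m) :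
    ∑ s ∈ Finset.Ico 1 m, f s * ((f s - f (s-1)) - (f (s+1) - f s))
      = f m * (1 - (f m - f (m-1))) := by
  induction m, hm using Nat.le_induction with
  | base =>
    simp only [Finset.Ico_self, Finset.sum_empty]
    rcases hstep 0 (by omega) with h | h <;> rw [h, h0] <;> ring
  | succ m hm ih =>
    rw [Finset.sum_Ico_succ_top (by omega)]
    rw [ih (fun s hs => hstep s (by omega))]
    have hmm : m + 1 - 1 = m := by omega
    rw [hmm]
    rcases hstep m (by omega) with h | h <;> rw [h] <;> ring

lemma pos_mem_Ico (p : Cell a b) : p.1.val + b - p.2.val ∈ Finset.Ico 1 (a + b) := by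
  have h1 := p.1.isLt; have h2 := p.2.isLt
  rw [Finset.mem_Ico]
  omega

lemma filter_fiber_in {I : Finset (Cell a b)} (s : ℕ) :
    (Finset.univ.filter fun p : Cell a b => CanToggleIn I p).filter
        (fun p => p.1.val + b - p.2.val = s) = tIn b I s := by
  rw [Finset.filter_filter, tIn]
  apply Finset.filter_congr
  intro p _
  have h2 := p.2.isLt
  constructor
  · rintro ⟨hcan, hpos⟩
    exact ⟨by omega, hcan⟩
  · rintro ⟨hpos, hcan⟩
    exact ⟨hcan, by omega⟩

lemma filter_fiber_out {I : Finset (Cell a b)} (s : ℕ) :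
    (Finset.univ.filter fun p : Cell a b => CanToggleOut I p).filter
        (fun p => p.1.val + b - p.2.val = s) = tOut b I s := by
  rw [Finset.filter_filter, tOut]
  apply Finset.filter_congr
  intro p _
  have h2 := p.2.isLt
  constructor
  · rintro ⟨hcan, hpos⟩
    exact ⟨by omega, hcan⟩
  · rintro ⟨hpos, hcan⟩
    exact ⟨hcan, by omega⟩

lemma card_filter_toggleIn {I : Finset (Cell a b)} :
    (Finset.univ.filter fun p : Cell a b => CanToggleIn I p).card
      = ∑ s ∈ Finset.Ico 1 (a + b), (tIn b I s).card := by
  have h := Finset.sum_fiberwise_of_maps_to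
    (s := Finset.univ.filter fun p : Cell a b => CanToggleIn I p)
    (g := fun p : Cell a b => p.1.val + b - p.2.val)
    (t := Finset.Ico 1 (a + b))
    (fun p _ => pos_mem_Ico p) (fun _ => (1 : ℕ))
  rw [Finset.card_eq_sum_ones, ← h]
  apply Finset.sum_congr rfl
  intro s _
  rw [filter_fiber_in s, Finset.card_eq_sum_ones]

lemma card_filter_toggleOut {I : Finset (Cell a b)} :
    (Finset.univ.filter fun p : Cell a b => CanToggleOut I p).card
      = ∑ s ∈ Finset.Ico 1 (a + b), (tOut b I s).card := by
  have h := Finset.sum_fiberwise_of_maps_to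
    (s := Finset.univ.filter fun p : Cell a b => CanToggleOut I p)
    (g := fun p : Cell a b => p.1.val + b - p.2.val)
    (t := Finset.Ico 1 (a + b))
    (fun p _ => pos_mem_Ico p) (fun _ => (1 : ℕ))
  rw [Finset.card_eq_sum_ones, ← h]
  apply Finset.sum_congr rfl
  intro s _
  rw [filter_fiber_out s, Finset.card_eq_sum_ones]

lemma isIdeal_Ie {e : α ≃ Fin (Fintype.card α)} (he : e ∈ linExts α) (k : ℕ) :
    IsIdeal (Ie e k) := by
  intro p hp q hq
  rw [mem_Ie] at hp ⊢
  have := linExts_mono he hq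
  omega

lemma exp_formula (f : Finset α → ℝ) :
    expectStat (muLin α) f =
      (∑ ek ∈ (linExts α) ×ˢ Finset.range (Fintype.card α + 1), f (Ie ek.1 ek.2)) /
        (((linExts α).card : ℝ) * ((Fintype.card α : ℝ) + 1)) := by
  rw [expectStat]
  have step1 : ∀ I, muLin α I * f I
      = (∑ e ∈ linExts α, ∑ k ∈ Finset.range (Fintype.card α + 1),
          if Finset.univ.filter (fun p => (e p : ℕ) < k) = I then f I else 0) /
        (((linExts α).card : ℝ) * ((Fintype.card α : ℝ) + 1)) := by
    intro I
    rw [muLin, div_mul_eq_mul_div]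
    congr 1
    rw [Finset.sum_mul]
    apply Finset.sum_congr rfl; intro e _
    rw [Finset.sum_mul]
    apply Finset.sum_congr rfl; intro k _
    split_ifs <;> simp
  rw [Finset.sum_congr rfl (fun I _ => step1 I), ← Finset.sum_div]
  congr 1
  rw [Finset.sum_product, Finset.sum_comm]
  apply Finset.sum_congr rfl; intro e he
  rw [Finset.sum_comm]
  apply Finset.sum_congr rfl; intro k _
  rw [Finset.sum_ite_eq (idealsFinset α) (Finset.univ.filter fun p => ((e p : ℕ) < k)) f]
  rw [if_pos]
  · rfl
  · rw [idealsFinset, Finset.mem_filter]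
    exact ⟨Finset.mem_univ _, isIdeal_Ie he k⟩

def Pairs (a b : ℕ) : Finset (((Cell a b) ≃ Fin (Fintype.card (Cell a b))) × ℕ) :=
  (linExts (Cell a b)) ×ˢ Finset.range (Fintype.card (Cell a b) + 1)

lemma swap_gen (A : Finset (Cell a b)) (T : Finset (Cell a b) → Cell a b → Prop)
    (w : Cell a b → ℝ) :
    ∑ ek ∈ Pairs a b, ∑ p ∈ A.filter (fun p => T (Ie ek.1 ek.2) p), w p
      = ∑ p ∈ A, w p * (((Pairs a b).filter (fun ek => T (Ie ek.1 ek.2) p)).card : ℝ) := by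
  have h1 : ∀ ek : ((Cell a b) ≃ Fin (Fintype.card (Cell a b))) × ℕ,
      ∑ p ∈ A.filter (fun p => T (Ie ek.1 ek.2) p), w p
        = ∑ p ∈ A, if T (Ie ek.1 ek.2) p then w p else 0 := fun ek => Finset.sum_filter _ _
  rw [Finset.sum_congr rfl (fun ek _ => h1 ek), Finset.sum_comm]
  apply Finset.sum_congr rfl
  intro p _
  rw [← Finset.sum_filter, Finset.sum_const, nsmul_eq_mul, mul_comm]

lemma fiber_sum_in (I : Finset (Cell a b)) (w : Cell a b → ℝ) :
    ∑ p ∈ Finset.univ.filter (fun p : Cell a b => CanToggleIn I p), w p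
      = ∑ s ∈ Finset.Ico 1 (a + b), ∑ p ∈ tIn b I s, w p := by
  rw [← Finset.sum_fiberwise_of_maps_to
    (g := fun p : Cell a b => p.1.val + b - p.2.val)
    (t := Finset.Ico 1 (a + b)) (fun p _ => pos_mem_Ico p) w]
  exact Finset.sum_congr rfl (fun s _ => by rw [filter_fiber_in])

lemma fiber_sum_out (I : Finset (Cell a b)) (w : Cell a b → ℝ) :
    ∑ p ∈ Finset.univ.filter (fun p : Cell a b => CanToggleOut I p), w p
      = ∑ s ∈ Finset.Ico 1 (a + b), ∑ p ∈ tOut b I s, w p := by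
  rw [← Finset.sum_fiberwise_of_maps_to
    (g := fun p : Cell a b => p.1.val + b - p.2.val)
    (t := Finset.Ico 1 (a + b)) (fun p _ => pos_mem_Ico p) w]
  exact Finset.sum_congr rfl (fun s _ => by rw [filter_fiber_out])

lemma linExts_card_pos (ha : 1 ≤ a) (hb : 1 ≤ b) : 0 < (linExts (Cell a b)).card := by
  have hcard : Fintype.card (Cell a b) = a * b := by
    simp [Fintype.card_prod]
  have hbound : ∀ p : Cell a b, p.1.val + a * p.2.val < a * b := by
    intro p
    have h1 := p.1.isLt
    have h2 := p.2.isLt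
    have h3 : a * (p.2.val + 1) ≤ a * b := Nat.mul_le_mul_left a h2
    rw [Nat.mul_succ] at h3
    omega
  let e0 : Cell a b ≃ Fin (a * b) :=
    { toFun := fun p => ⟨p.1.val + a * p.2.val, hbound p⟩
      invFun := fun x => (⟨x.val % a, Nat.mod_lt _ (by omega)⟩,
        ⟨x.val / a, Nat.div_lt_of_lt_mul x.isLt⟩)
      left_inv := by
        intro p
        refine Prod.ext (Fin.ext ?_) (Fin.ext ?_)
        · show (p.1.val + a * p.2.val) % a = p.1.val
          rw [Nat.add_mul_mod_self_left]
          exact Nat.mod_eq_of_lt p.1.isLt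
        · show (p.1.val + a * p.2.val) / a = p.2.val
          rw [Nat.add_mul_div_left _ _ (by omega : 0 < a)]
          rw [Nat.div_eq_of_lt p.1.isLt]
          omega
      right_inv := by
        intro x
        apply Fin.ext
        show x.val % a + a * (x.val / a) = x.val
        exact Nat.mod_add_div x.val a }
  let e1 : Cell a b ≃ Fin (Fintype.card (Cell a b)) := e0.trans (finCongr hcard.symm)
  apply Finset.card_pos.mpr
  refine ⟨e1, ?_⟩
  rw [mem_linExts_iff]
  intro p q hpq
  rw [Prod.le_def] at hpq
  obtain ⟨h1, h2⟩ := hpq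
  rw [Fin.le_def] at h1 h2
  show (e1 p).val ≤ (e1 q).val
  have hval : ∀ r : Cell a b, (e1 r).val = r.1.val + a * r.2.val := fun r => rfl
  rw [hval, hval]
  have := Nat.mul_le_mul_left a h2
  omega

set_option maxHeartbeats 1000000 in
lemma pairs_ideal {a b : ℕ} : ∀ ek ∈ Pairs a b, IsIdeal (Ie ek.1 ek.2) := by
  intro ek hek
  rw [Pairs, Finset.mem_product] at hek
  exact isIdeal_Ie hek.1 ek.2

def TinC (a b : ℕ) (p : Cell a b) : ℕ :=
  ((Pairs a b).filter (fun ek => CanToggleIn (Ie ek.1 ek.2) p)).card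
def ToutC (a b : ℕ) (p : Cell a b) : ℕ :=
  ((Pairs a b).filter (fun ek => CanToggleOut (Ie ek.1 ek.2) p)).card
def GG (a b : ℕ) (s : ℕ) : ℝ := ∑ ek ∈ Pairs a b, (hh b (Ie ek.1 ek.2) s : ℝ)

lemma TinC_eq_ToutC {a b : ℕ} (p : Cell a b) : TinC a b p = ToutC a b p := by
  rw [TinC, ToutC, Pairs]
  exact toggle_sym p

lemma GG_zero {a b : ℕ} : GG a b 0 = 0 := by
  rw [GG]
  simp only [hh_zero, Nat.cast_zero, Finset.sum_const_zero]

lemma GG_top {a b : ℕ} : GG a b (a + b) = ((Pairs a b).card : ℝ) * a := by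
  rw [GG]
  simp only [hh_top]
  rw [Finset.sum_const, nsmul_eq_mul]

lemma CC_eq {a b : ℕ} (s : ℕ) :
    (∑ ek ∈ Pairs a b, ((tIn b (Ie ek.1 ek.2) s).card : ℝ))
      = ∑ ek ∈ Pairs a b, ((tOut b (Ie ek.1 ek.2) s).card : ℝ) := by
  have htin : ∀ ek : ((Cell a b) ≃ Fin (Fintype.card (Cell a b))) × ℕ,
      ((tIn b (Ie ek.1 ek.2) s).card : ℝ)
        = ∑ p ∈ (Finset.univ.filter fun p : Cell a b => p.1.val + b = p.2.val + s).filter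
            (fun p => CanToggleIn (Ie ek.1 ek.2) p), (1 : ℝ) := by
    intro ek
    rw [Finset.sum_const, nsmul_eq_mul, mul_one, Finset.filter_filter, tIn]
  have htout : ∀ ek : ((Cell a b) ≃ Fin (Fintype.card (Cell a b))) × ℕ,
      ((tOut b (Ie ek.1 ek.2) s).card : ℝ)
        = ∑ p ∈ (Finset.univ.filter fun p : Cell a b => p.1.val + b = p.2.val + s).filter
            (fun p => CanToggleOut (Ie ek.1 ek.2) p), (1 : ℝ) := by
    intro ek
    rw [Finset.sum_const, nsmul_eq_mul, mul_one, Finset.filter_filter, tOut]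
  rw [Finset.sum_congr rfl (fun ek _ => htin ek),
    Finset.sum_congr rfl (fun ek _ => htout ek),
    swap_gen _ (fun I p => CanToggleIn I p) (fun _ => (1:ℝ)),
    swap_gen _ (fun I p => CanToggleOut I p) (fun _ => (1:ℝ))]
  apply Finset.sum_congr rfl
  intro p _
  have h : TinC a b p = ToutC a b p := TinC_eq_ToutC p
  rw [TinC, ToutC] at h
  rw [h]

lemma GG_rec {a b : ℕ} (hb : 1 ≤ b) {s : ℕ} (hs1 : 1 ≤ s) (hs2 : s < a + b) :
    GG a b (s+1) - GG a b s = GG a b s - GG a b (s-1) := by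
  have h1 : ∑ ek ∈ Pairs a b,
      (((tOut b (Ie ek.1 ek.2) s).card : ℝ) - (tIn b (Ie ek.1 ek.2) s).card)
      = ∑ ek ∈ Pairs a b,
        (((hh b (Ie ek.1 ek.2) s : ℝ) - (hh b (Ie ek.1 ek.2) (s-1) : ℝ))
          - ((hh b (Ie ek.1 ek.2) (s+1) : ℝ) - (hh b (Ie ek.1 ek.2) s : ℝ))) :=
    Finset.sum_congr rfl (fun ek hek => diff_eq hb (pairs_ideal ek hek) hs1 hs2)
  rw [Finset.sum_sub_distrib, CC_eq s, sub_self] at h1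
  rw [Finset.sum_sub_distrib, Finset.sum_sub_distrib, Finset.sum_sub_distrib] at h1
  rw [GG, GG, GG]
  linarith [h1]

lemma GG_lin {a b : ℕ} (hb : 1 ≤ b) : ∀ s, s ≤ a + b → GG a b s = s * GG a b 1 := by
  intro s
  induction s using Nat.strong_induction_on with
  | _ s ih =>
    intro hs
    match s with
    | 0 => rw [GG_zero]; simp
    | 1 => simp
    | (t+2) =>
      have h1 := ih (t+1) (by omega) (by omega)
      have h2 := ih t (by omega) (by omega)
      have h3 := GG_rec (a := a) hb (s := t+1) (by omega) (by omega)
      have ht : t + 1 - 1 = t := by omega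
      rw [ht] at h3
      have h4 : GG a b (t+2) = 2 * GG a b (t+1) - GG a b t := by linarith
      rw [h4, h1, h2]
      push_cast
      ring

lemma W_eq1 {a b : ℕ} (ha : 1 ≤ a) (hb : 1 ≤ b) :
    ∑ ek ∈ Pairs a b, (∑ s ∈ Finset.Ico 1 (a + b),
      (hh b (Ie ek.1 ek.2) s : ℝ) *
        (((hh b (Ie ek.1 ek.2) s : ℝ) - (hh b (Ie ek.1 ek.2) (s-1) : ℝ))
          - ((hh b (Ie ek.1 ek.2) (s+1) : ℝ) - (hh b (Ie ek.1 ek.2) s : ℝ))))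
      = (a : ℝ) * (((Pairs a b).card : ℝ) - (((Pairs a b).card : ℝ) * a - GG a b (a+b-1))) := by
  have hm : 1 ≤ a + b := by omega
  have htele : ∀ ek ∈ Pairs a b, (∑ s ∈ Finset.Ico 1 (a + b),
      (hh b (Ie ek.1 ek.2) s : ℝ) *
        (((hh b (Ie ek.1 ek.2) s : ℝ) - (hh b (Ie ek.1 ek.2) (s-1) : ℝ))
          - ((hh b (Ie ek.1 ek.2) (s+1) : ℝ) - (hh b (Ie ek.1 ek.2) s : ℝ))))
      = (a : ℝ) * (1 - ((a : ℝ) - (hh b (Ie ek.1 ek.2) (a+b-1) : ℝ))) := by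
    intro ek hek
    have hI := pairs_ideal ek hek
    have h := tele (a+b) (fun s => (hh b (Ie ek.1 ek.2) s : ℝ))
      (by simp [hh_zero]) (fun s hs => by
        have h1 := hh_mono hI (s := s) (by omega)
        have h2 := hh_step hI (s := s) (by omega)
        have h3 : hh b (Ie ek.1 ek.2) (s+1) = hh b (Ie ek.1 ek.2) s
            ∨ hh b (Ie ek.1 ek.2) (s+1) = hh b (Ie ek.1 ek.2) s + 1 := by omega
        rcases h3 with h | h
        · left
          show ((hh b (Ie ek.1 ek.2) (s+1) : ℕ) : ℝ) = ((hh b (Ie ek.1 ek.2) s : ℕ) : ℝ)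
          rw [h]
        · right
          show ((hh b (Ie ek.1 ek.2) (s+1) : ℕ) : ℝ) = ((hh b (Ie ek.1 ek.2) s : ℕ) : ℝ) + 1
          rw [h]; push_cast; ring) hm
    beta_reduce at h
    rw [h, hh_top]
  rw [Finset.sum_congr rfl htele]
  have hexp : ∀ ek ∈ Pairs a b,
      (a : ℝ) * (1 - ((a : ℝ) - (hh b (Ie ek.1 ek.2) (a+b-1) : ℝ)))
        = ((a : ℝ) - (a:ℝ) * a) + (a:ℝ) * (hh b (Ie ek.1 ek.2) (a+b-1) : ℝ) :=
    fun ek _ => by ring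
  rw [Finset.sum_congr rfl hexp, Finset.sum_add_distrib, Finset.sum_const, ← Finset.mul_sum]
  rw [GG, nsmul_eq_mul]
  ring

lemma W_eq2 {a b : ℕ} (hb : 1 ≤ b) :
    ∑ ek ∈ Pairs a b, (∑ s ∈ Finset.Ico 1 (a + b),
      (hh b (Ie ek.1 ek.2) s : ℝ) *
        (((hh b (Ie ek.1 ek.2) s : ℝ) - (hh b (Ie ek.1 ek.2) (s-1) : ℝ))
          - ((hh b (Ie ek.1 ek.2) (s+1) : ℝ) - (hh b (Ie ek.1 ek.2) s : ℝ))))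
      = ∑ p : Cell a b, (ToutC a b p : ℝ) := by
  have hper : ∀ ek ∈ Pairs a b, (∑ s ∈ Finset.Ico 1 (a + b),
      (hh b (Ie ek.1 ek.2) s : ℝ) *
        (((hh b (Ie ek.1 ek.2) s : ℝ) - (hh b (Ie ek.1 ek.2) (s-1) : ℝ))
          - ((hh b (Ie ek.1 ek.2) (s+1) : ℝ) - (hh b (Ie ek.1 ek.2) s : ℝ))))
      = (∑ p ∈ Finset.univ.filter (fun p : Cell a b => CanToggleOut (Ie ek.1 ek.2) p),
          ((p.1.val : ℝ) + 1))
        - ∑ p ∈ Finset.univ.filter (fun p : Cell a b => CanToggleIn (Ie ek.1 ek.2) p),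
          (p.1.val : ℝ) := by
    intro ek hek
    have hI := pairs_ideal ek hek
    rw [fiber_sum_out _ (fun p => (p.1.val : ℝ) + 1), fiber_sum_in _ (fun p => (p.1.val : ℝ))]
    rw [← Finset.sum_sub_distrib]
    apply Finset.sum_congr rfl
    intro s hs
    rw [Finset.mem_Ico] at hs
    exact (wdiff_eq hb hI hs.1 hs.2).symm
  rw [Finset.sum_congr rfl hper, Finset.sum_sub_distrib]
  rw [swap_gen Finset.univ (fun I p => CanToggleOut I p) (fun p => (p.1.val : ℝ) + 1)]
  rw [swap_gen Finset.univ (fun I p => CanToggleIn I p) (fun p => (p.1.val : ℝ))]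
  rw [← Finset.sum_sub_distrib]
  apply Finset.sum_congr rfl
  intro p _
  have h : TinC a b p = ToutC a b p := TinC_eq_ToutC p
  rw [TinC, ToutC] at h
  rw [h, ToutC]
  ring

lemma Tout_total {a b : ℕ} (ha : 1 ≤ a) (hb : 1 ≤ b) :
    ∑ p : Cell a b, (ToutC a b p : ℝ)
      = ((Pairs a b).card : ℝ) * a * b / (a + b) := by
  rw [← W_eq2 hb, W_eq1 ha hb]
  have hG1 : ((a:ℝ) + b) * GG a b 1 = ((Pairs a b).card : ℝ) * a := by
    have h := GG_lin hb (a+b) (le_refl _)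
    rw [GG_top] at h
    push_cast at h
    linarith
  have hGm1 : GG a b (a+b-1) = ((a+b-1 : ℕ) : ℝ) * GG a b 1 := GG_lin hb (a+b-1) (by omega)
  have hab : ((a:ℝ) + b) ≠ 0 := by positivity
  have hG1' : GG a b 1 = ((Pairs a b).card : ℝ) * a / (a + b) := by
    rw [eq_div_iff hab]
    linarith [hG1]
  rw [hGm1, hG1']
  push_cast [Nat.cast_sub (by omega : 1 ≤ a + b)]
  field_simp
  ring

lemma A_total {a b : ℕ} (ha : 1 ≤ a) (hb : 1 ≤ b) :
    ∑ ek ∈ Pairs a b, ((jag (Ie ek.1 ek.2) : ℕ) : ℝ)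
      = 2 * (((Pairs a b).card : ℝ) * a * b / (a + b)) := by
  have hjag : ∀ ek ∈ Pairs a b, ((jag (Ie ek.1 ek.2) : ℕ) : ℝ)
      = (∑ p ∈ Finset.univ.filter (fun p : Cell a b => CanToggleIn (Ie ek.1 ek.2) p), (1:ℝ))
        + ∑ p ∈ Finset.univ.filter (fun p : Cell a b => CanToggleOut (Ie ek.1 ek.2) p),
          (1:ℝ) := by
    intro ek _
    rw [jag]
    push_cast
    rw [Finset.sum_const, Finset.sum_const, nsmul_eq_mul, nsmul_eq_mul, mul_one, mul_one]
  rw [Finset.sum_congr rfl hjag, Finset.sum_add_distrib]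
  rw [swap_gen Finset.univ (fun I p => CanToggleIn I p) (fun _ => (1:ℝ))]
  rw [swap_gen Finset.univ (fun I p => CanToggleOut I p) (fun _ => (1:ℝ))]
  rw [← Finset.sum_add_distrib]
  have hcomb : ∀ p : Cell a b,
      (1:ℝ) * (((Pairs a b).filter (fun ek => CanToggleIn (Ie ek.1 ek.2) p)).card : ℝ)
        + 1 * (((Pairs a b).filter (fun ek => CanToggleOut (Ie ek.1 ek.2) p)).card : ℝ)
      = 2 * ((ToutC a b p : ℕ) : ℝ) := by
    intro p
    have h : TinC a b p = ToutC a b p := TinC_eq_ToutC p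
    rw [TinC, ToutC] at h
    rw [h, ToutC]
    ring
  rw [Finset.sum_congr rfl (fun p _ => hcomb p), ← Finset.mul_sum, Tout_total ha hb]

theorem main_theorem (a b : ℕ) (ha : 1 ≤ a) (hb : 1 ≤ b) :
    expectStat (muLin (Fin a × Fin b)) (fun I => (jag I : ℝ)) =
      2 * a * b / (a + b) := by
  rw [exp_formula]
  have hA := A_total ha hb
  rw [Pairs] at hA
  rw [hA]
  have hNval : (((linExts (Cell a b)) ×ˢ Finset.range (Fintype.card (Cell a b) + 1)).card : ℝ)
      = ((linExts (Cell a b)).card : ℝ) * ((Fintype.card (Cell a b) : ℝ) + 1) := by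
    rw [Finset.card_product, Finset.card_range]
    push_cast
    ring
  rw [hNval]
  have hL := linExts_card_pos ha hb
  have hL' : (0:ℝ) < ((linExts (Cell a b)).card : ℝ) := by exact_mod_cast hL
  have hc0 : (0:ℝ) ≤ (Fintype.card (Cell a b) : ℝ) := Nat.cast_nonneg _
  have hc' : (0:ℝ) < (Fintype.card (Cell a b) : ℝ) + 1 := by linarith
  have hab : ((a:ℝ) + b) ≠ 0 := by positivity
  have hD : ((linExts (Cell a b)).card : ℝ) * ((Fintype.card (Cell a b) : ℝ) + 1) ≠ 0 :=
    ne_of_gt (mul_pos hL' hc')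
  field_simp


end CHHM

/-- Theorem 1.1 of Chan–Haddadan–Hopkins–Moci: for the product of an
`a`-element chain and a `b`-element chain, the expected jaggedness of an order ideal under
the linear distribution is `2ab/(a+b)`, the harmonic mean of `a` and `b`. -/
theorem expected_jaggedness_rectangle_linear (a b : ℕ) (ha : 1 ≤ a) (hb : 1 ≤ b) :
    expectStat (muLin (Fin a × Fin b)) (fun I => (jag I : ℝ)) =
      2 * a * b / (a + b) := by
  exact CHHM.main_theorem a b ha hb
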